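/- For every integer m ≥ 3, the total domination number of the graph G_{4m} equals 3, i.e., γ_t(G_{4m}) = 3. -/

import Mathlib

open SimpleGraph

/-- `S` is a total dominating set of `G`: every vertex of `G` has a neighbor in `S`. -/
def IsTDS {V : Type*} (G : SimpleGraph V) (S : Set V) : Prop :=
  ∀ v : V, ∃ u ∈ S, G.Adj v u

/-- The total domination number `γₜ(G)`: the minimum cardinality of a total dominating set. -/
noncomputable def gammaT {V : Type*} (G : SimpleGraph V) : ℕ :=
  sInf {n : ℕ | ∃ S : Set V, IsTDS G S ∧ S.ncard = n}

/-- The degree of a vertex. -/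
noncomputable def deg {V : Type*} (G : SimpleGraph V) (v : V) : ℕ :=
  (G.neighborSet v).ncard

/-- The maximum degree `Δ(G)`. -/
noncomputable def maxDeg {V : Type*} [Fintype V] (G : SimpleGraph V) : ℕ :=
  Finset.univ.sup fun v => deg G v

/-- The vertex-deleted graph `G − v`. -/
def delVert {V : Type*} (G : SimpleGraph V) (v : V) : SimpleGraph {u : V // u ≠ v} :=
  G.induce {u : V | u ≠ v}

/-- `G` is 3-γₜ-critical: `γₜ(G) = 3` and for every vertex `v` that is not adjacent to a
vertex of degree one, `γₜ(G − v) = 2`. -/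
def IsThreeGammaTCritical {V : Type*} (G : SimpleGraph V) : Prop :=
  gammaT G = 3 ∧
    ∀ v : V, (¬ ∃ u : V, G.Adj v u ∧ deg G u = 1) → gammaT (delVert G v) = 2

/-- Vertices of `G_{4m}`: `x, y, z`, `y₁,…,y_{2m−2}` and `z₁,…,z_{2m−1}`;
`Y i` stands for `y_{i+1}` and `Z i` for `z_{i+1}` (0-based `Fin` indices). -/
inductive V40 (m : ℕ) : Type
  | x : V40 m
  | y : V40 m
  | z : V40 m
  | Y : Fin (2 * m - 2) → V40 m
  | Z : Fin (2 * m - 1) → V40 m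
  deriving DecidableEq, Fintype

/-- Base edge relation of `G_{4m}` (the paper's 1-based indices are shifted down by 1):
`x yᵢ`, `x zᵢ`, `y yᵢ`, `y z`, `z zᵢ`, `yᵢ yⱼ` for `i < j`, `j ≠ i + m − 1`,
`zᵢ z_{1+((i+m−2) mod (2m−1))}`, `yᵢ zⱼ` for `j ≠ i`, `j ≠ i + 1`, and the extra edge `y₁ z₂`. -/
def R40 (m : ℕ) : V40 m → V40 m → Prop
  | .x, .Y _ => True
  | .x, .Z _ => True
  | .y, .Y _ => True
  | .y, .z => True
  | .z, .Z _ => True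
  | .Y i, .Y j => i.val < j.val ∧ j.val ≠ i.val + m - 1
  | .Z i, .Z j => j.val = (i.val + m - 1) % (2 * m - 1)
  | .Y i, .Z j => (j.val ≠ i.val ∧ j.val ≠ i.val + 1) ∨ (i.val = 0 ∧ j.val = 1)
  | _, _ => False

/-- The graph `G_{4m}`. -/
def G40 (m : ℕ) : SimpleGraph (V40 m) := SimpleGraph.fromRel (R40 m)


private lemma modfact (k t : ℕ) (h : t < 2*k) : t % k = t ∨ (k ≤ t ∧ t % k + k = t) := by
  rcases Nat.lt_or_ge t k with h' | h'
  · exact Or.inl (Nat.mod_eq_of_lt h')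
  · refine Or.inr ⟨h', ?_⟩
    rw [Nat.mod_eq_sub_mod h', Nat.mod_eq_of_lt (by omega)]
    omega


set_option maxHeartbeats 1000000 in
private lemma upper40 (m : ℕ) (hm : 3 ≤ m) :
    3 ∈ {n : ℕ | ∃ S : Set (V40 m), IsTDS (G40 m) S ∧ S.ncard = n} := by
  have hY0 : (0:ℕ) < 2*m-2 := by omega
  refine ⟨{V40.y, V40.z, V40.Y ⟨0, hY0⟩}, ?_, ?_⟩
  · intro v
    cases v with
    | x => exact ⟨V40.Y ⟨0, hY0⟩, by simp, by simp [G40, R40]⟩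
    | y => exact ⟨V40.z, by simp, by simp [G40, R40]⟩
    | z => exact ⟨V40.y, by simp, by simp [G40, R40]⟩
    | Y i => exact ⟨V40.y, by simp, by simp [G40, R40]⟩
    | Z j => exact ⟨V40.z, by simp, by simp [G40, R40]⟩
  · rw [Set.ncard_insert_of_notMem (by simp), Set.ncard_insert_of_notMem (by simp),
      Set.ncard_singleton]

set_option maxHeartbeats 1000000 in
private lemma lower40 (m : ℕ) (hm : 3 ≤ m) :
    ∀ n ∈ {n : ℕ | ∃ S : Set (V40 m), IsTDS (G40 m) S ∧ S.ncard = n}, 3 ≤ n := by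
  rintro n ⟨S, hS, rfl⟩
  by_contra hlt
  push_neg at hlt
  have key : ∀ v w : V40 m, v ∈ S → w ∈ S → v ≠ w → S = {v, w} := by
    intro v w hv hw hvw
    refine (Set.eq_of_subset_of_ncard_le ?_ ?_ (Set.toFinite S)).symm
    · intro t ht
      simp only [Set.mem_insert_iff, Set.mem_singleton_iff] at ht
      rcases ht with rfl | rfl
      · exact hv
      · exact hw
    · rw [Set.ncard_pair hvw]; omega
  obtain ⟨u1, hu1, hy1⟩ := hS V40.y
  obtain ⟨u2, hu2, hz2⟩ := hS V40.z
  cases u1 with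
  | x => simp [G40, R40] at hy1
  | y => simp at hy1
  | Z j => simp [G40, R40] at hy1
  | z =>
    cases u2 with
    | x => simp [G40, R40] at hz2
    | z => simp at hz2
    | Y i => simp [G40, R40] at hz2
    | y =>
      have hSeq := key _ _ hu1 hu2 (by simp)
      obtain ⟨u, hu, hw⟩ := hS V40.x
      rw [hSeq] at hu
      simp only [Set.mem_insert_iff, Set.mem_singleton_iff] at hu
      rcases hu with rfl | rfl <;> simp [G40, R40] at hw
    | Z b =>
      have hSeq := key _ _ hu1 hu2 (by simp)
      have hb := b.isLt
      obtain ⟨u, hu, hw⟩ := hS (V40.Y ⟨min b.val (2*m-3), by omega⟩)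
      rw [hSeq] at hu
      simp only [Set.mem_insert_iff, Set.mem_singleton_iff] at hu
      rcases hu with rfl | rfl
      · simp [G40, R40] at hw
      · simp [G40, R40] at hw
        omega
  | Y a =>
    have ha := a.isLt
    cases u2 with
    | x => simp [G40, R40] at hz2
    | z => simp at hz2
    | Y i => simp [G40, R40] at hz2
    | y =>
      have hSeq := key _ _ hu1 hu2 (by simp)
      obtain ⟨u, hu, hw⟩ := hS (V40.Z ⟨a.val, by omega⟩)
      rw [hSeq] at hu
      simp only [Set.mem_insert_iff, Set.mem_singleton_iff] at hu
      rcases hu with rfl | rfl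
      · simp [G40, R40] at hw
        omega
      · simp [G40, R40] at hw
    | Z b =>
      have hb := b.isLt
      have hSeq := key _ _ hu1 hu2 (by simp)
      have hadj : (G40 m).Adj (V40.Y a) (V40.Z b) := by
        obtain ⟨u, hu, hw⟩ := hS (V40.Y a)
        rw [hSeq] at hu
        simp only [Set.mem_insert_iff, Set.mem_singleton_iff] at hu
        rcases hu with rfl | rfl
        · exact absurd hw (G40 m).irrefl
        · exact hw
      simp only [G40, SimpleGraph.fromRel_adj, R40] at hadj
      replace hadj := hadj.2
      simp only [or_false, false_or] at hadj
      by_cases hc1 : a.val = 0 ∧ b.val = 1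
      · obtain ⟨u, hu, hw⟩ := hS (V40.Z ⟨0, by omega⟩)
        rw [hSeq] at hu
        simp only [Set.mem_insert_iff, Set.mem_singleton_iff] at hu
        rcases hu with rfl | rfl
        · simp [G40, R40] at hw
          omega
        · simp [G40, R40, Fin.ext_iff] at hw
          rcases modfact (2*m-1) (m-1) (by omega) with h1 | h1 <;>
            rcases modfact (2*m-1) (b.val+m-1) (by omega) with h2 | h2 <;> omega
      · have hBA : b.val ≠ a.val ∧ b.val ≠ a.val + 1 := by
          rcases hadj with h | h
          · exact h
          · exact absurd h hc1
        by_cases hc2 : a.val + m ≤ 2*m-2 ∧ b.val = a.val + m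
        · obtain ⟨u, hu, hw⟩ := hS (V40.Y ⟨a.val+m-1, by omega⟩)
          rw [hSeq] at hu
          simp only [Set.mem_insert_iff, Set.mem_singleton_iff] at hu
          rcases hu with rfl | rfl
          · simp [G40, R40, Fin.ext_iff] at hw
            omega
          · simp [G40, R40] at hw
            omega
        by_cases hc3 : m-1 ≤ a.val ∧ b.val + m = a.val + 1
        · obtain ⟨u, hu, hw⟩ := hS (V40.Y ⟨b.val, by omega⟩)
          rw [hSeq] at hu
          simp only [Set.mem_insert_iff, Set.mem_singleton_iff] at hu
          rcases hu with rfl | rfl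
          · simp [G40, R40, Fin.ext_iff] at hw
            omega
          · simp [G40, R40] at hw
            omega
        by_cases hc4 : 1 ≤ a.val ∧ (b.val = a.val + m - 1 ∨ a.val = b.val + m)
        · obtain ⟨u, hu, hw⟩ := hS (V40.Z ⟨a.val+1, by omega⟩)
          rw [hSeq] at hu
          simp only [Set.mem_insert_iff, Set.mem_singleton_iff] at hu
          rcases hu with rfl | rfl
          · simp [G40, R40] at hw
            omega
          · simp [G40, R40, Fin.ext_iff] at hw
            rcases modfact (2*m-1) (a.val+m) (by omega) with h1 | h1 <;>
              rcases modfact (2*m-1) (b.val+m-1) (by omega) with h2 | h2 <;> omega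
        by_cases hc5 : a.val = 0 ∧ b.val = m-1
        · obtain ⟨u, hu, hw⟩ := hS (V40.Y ⟨m-1, by omega⟩)
          rw [hSeq] at hu
          simp only [Set.mem_insert_iff, Set.mem_singleton_iff] at hu
          rcases hu with rfl | rfl
          · simp [G40, R40, Fin.ext_iff] at hw
            omega
          · simp [G40, R40] at hw
            omega
        · obtain ⟨u, hu, hw⟩ := hS (V40.Z ⟨a.val, by omega⟩)
          rw [hSeq] at hu
          simp only [Set.mem_insert_iff, Set.mem_singleton_iff] at hu
          rcases hu with rfl | rfl
          · simp [G40, R40] at hw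
            omega
          · simp [G40, R40, Fin.ext_iff] at hw
            rcases modfact (2*m-1) (a.val+m-1) (by omega) with h1 | h1 <;>
              rcases modfact (2*m-1) (b.val+m-1) (by omega) with h2 | h2 <;> omega

/-- Lemma 2.6: `γₜ(G_{4m}) = 3` for every `m ≥ 3`. -/
theorem gammaT_G40 (m : ℕ) (hm : 3 ≤ m) : gammaT (G40 m) = 3 := by
  have h := upper40 m hm
  have h2 := lower40 m hm
  exact le_antisymm (Nat.sInf_le h) (le_csInf ⟨3, h⟩ h2)
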